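/- arXiv:2511.02549 — 3 statements merged into one kernel-verified Lean document; each statement's English description precedes it below -/
import Mathlib

section
/- Let k be a field and let X be a scheme separated and of finite type over k which admits a finite stratification X = ⋃_{i=1}^n U_i by locally closed subschemes U_i each of which is a J-linear k-scheme. Then X is J-linear. -/
open AlgebraicGeometry CategoryTheory CategoryTheory.Limits

noncomputable section

/-- The base scheme `Spec k` of a field `k`. -/
def SpecOfField (k : Type) [Field k] : Scheme := Spec (CommRingCat.of k)

/-- Affine `N`-space `𝔸^N_k = Spec k[x₁, …, x_N]`, as a scheme over `Spec k`. -/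
def AffineSpaceOver (k : Type) [Field k] (N : ℕ) : Over (SpecOfField k) :=
  Over.mk (Spec.map (CommRingCat.ofHom (algebraMap k (MvPolynomial (Fin N) k))))

/-- `IsJLinear k n Y` says that the `k`-scheme `Y` is `n`-J-linear:
`Y` is `0`-J-linear if it is empty or isomorphic (as a `k`-scheme) to some `𝔸^N_k`, and
`Y` is `(n+1)`-J-linear if there is a triple `(Z, X, U)` with `Z ↪ X` a closed immersion
with open complement `U = X \ Z` such that either `Y = U` and both `Z` and `X` are
`n`-J-linear, or `Y = X` and both `Z` and `U` are `n`-J-linear. -/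
inductive IsJLinear (k : Type) [Field k] : ℕ → Over (SpecOfField k) → Prop
  | empty (Y : Over (SpecOfField k)) (h : IsEmpty Y.left.carrier) : IsJLinear k 0 Y
  | affine (Y : Over (SpecOfField k)) (N : ℕ) (h : Nonempty (Y ≅ AffineSpaceOver k N)) :
      IsJLinear k 0 Y
  | openCompl (n : ℕ) (Y Z X : Over (SpecOfField k)) (i : Z ⟶ X) (j : Y ⟶ X)
      (hi : IsClosedImmersion i.left) (hj : IsOpenImmersion j.left)
      (hcompl : Set.range j.left.base = (Set.range i.left.base)ᶜ)
      (hZ : IsJLinear k n Z) (hX : IsJLinear k n X) : IsJLinear k (n + 1) Y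
  | closedPart (n : ℕ) (Y Z U : Over (SpecOfField k)) (i : Z ⟶ Y) (j : U ⟶ Y)
      (hi : IsClosedImmersion i.left) (hj : IsOpenImmersion j.left)
      (hcompl : Set.range j.left.base = (Set.range i.left.base)ᶜ)
      (hZ : IsJLinear k n Z) (hU : IsJLinear k n U) : IsJLinear k (n + 1) Y

/-- A `k`-scheme is J-linear if it is `n`-J-linear for some `n ≥ 0`. -/
def IsJLinearScheme (k : Type) [Field k] (Y : Over (SpecOfField k)) : Prop :=
  ∃ n : ℕ, IsJLinear k n Y

/-- A morphism of schemes is a locally closed immersion if it factors as a closed immersion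
followed by an open immersion. -/
def IsLocallyClosedImmersion {X Y : Scheme} (f : X ⟶ Y) : Prop :=
  ∃ (W : Scheme) (g : X ⟶ W) (h : W ⟶ Y), IsClosedImmersion g ∧ IsOpenImmersion h ∧ g ≫ h = f

/-! ### Auxiliary lemmas for the proof -/

/-- The empty `k`-scheme, as an object over `Spec k`. -/
def JLEmptyOver (k : Type) [Field k] : Over (SpecOfField k) :=
  Over.mk (Scheme.emptyTo (SpecOfField k))

lemma JL_isJLinear_of_isEmpty (k : Type) [Field k] (n : ℕ) :
    ∀ (Y : Over (SpecOfField k)), IsEmpty Y.left.carrier → IsJLinear k n Y := by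
  induction n with
  | zero => exact fun Y h => IsJLinear.empty Y h
  | succ n ih =>
    intro Y h
    have hEmpty : IsEmpty (JLEmptyOver k).left.carrier := inferInstanceAs (IsEmpty PEmpty)
    refine IsJLinear.closedPart n Y Y (JLEmptyOver k) (𝟙 Y)
      (Over.homMk (Scheme.emptyTo Y.left) (Scheme.empty_ext _ _)) ?_ ?_ ?_ (ih Y h)
      (ih (JLEmptyOver k) hEmpty)
    · show IsClosedImmersion (𝟙 Y.left : Y.left ⟶ Y.left)
      infer_instance
    · show IsOpenImmersion (Scheme.emptyTo Y.left)
      infer_instance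
    · show Set.range (Scheme.emptyTo Y.left).base = (Set.range (𝟙 Y.left : Y.left ⟶ Y.left).base)ᶜ
      have h1 : IsEmpty ↑↑(∅ : Scheme).toPresheafedSpace := inferInstanceAs (IsEmpty PEmpty)
      rw [Set.range_eq_empty (Scheme.emptyTo Y.left).base, eq_comm, Set.compl_empty_iff]
      exact Set.eq_univ_iff_forall.mpr fun x => ⟨x, rfl⟩

lemma JL_isJLinear_mono {k : Type} [Field k] {m n : ℕ} (h : m ≤ n) {Y : Over (SpecOfField k)}
    (hY : IsJLinear k m Y) : IsJLinear k n Y := by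
  induction h with
  | refl => exact hY
  | step _ ih =>
    refine IsJLinear.closedPart _ Y Y (JLEmptyOver k) (𝟙 Y)
      (Over.homMk (Scheme.emptyTo Y.left) (Scheme.empty_ext _ _)) ?_ ?_ ?_ ih
      (JL_isJLinear_of_isEmpty k _ _ (inferInstanceAs (IsEmpty PEmpty)))
    · show IsClosedImmersion (𝟙 Y.left : Y.left ⟶ Y.left)
      infer_instance
    · show IsOpenImmersion (Scheme.emptyTo Y.left)
      infer_instance
    · show Set.range (Scheme.emptyTo Y.left).base = (Set.range (𝟙 Y.left : Y.left ⟶ Y.left).base)ᶜ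
      have h1 : IsEmpty ↑↑(∅ : Scheme).toPresheafedSpace := inferInstanceAs (IsEmpty PEmpty)
      rw [Set.range_eq_empty (Scheme.emptyTo Y.left).base, eq_comm, Set.compl_empty_iff]
      exact Set.eq_univ_iff_forall.mpr fun x => ⟨x, rfl⟩

lemma JL_glue {k : Type} [Field k] {Z U Y : Over (SpecOfField k)} (i : Z ⟶ Y) (j : U ⟶ Y)
    (hi : IsClosedImmersion i.left) (hj : IsOpenImmersion j.left)
    (hc : Set.range j.left.base = (Set.range i.left.base)ᶜ)
    (hZ : IsJLinearScheme k Z) (hU : IsJLinearScheme k U) : IsJLinearScheme k Y := by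
  obtain ⟨m, hm⟩ := hZ
  obtain ⟨l, hl⟩ := hU
  exact ⟨max m l + 1, IsJLinear.closedPart _ Y Z U i j hi hj hc
    (JL_isJLinear_mono (le_max_left m l) hm) (JL_isJLinear_mono (le_max_right m l) hl)⟩

lemma JL_locallyClosed_eq {α : Type} [TopologicalSpace α] {s : Set α} (h : IsLocallyClosed s) :
    ∃ U, IsOpen U ∧ s = U ∩ closure s := by
  obtain ⟨U, Z, hU, hZ, rfl⟩ := h
  exact ⟨U, hU, subset_antisymm (Set.subset_inter Set.inter_subset_left subset_closure)
    (fun x hx => ⟨hx.1, closure_minimal Set.inter_subset_right hZ hx.2⟩)⟩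

lemma JL_aux (k : Type) [Field k] (n : ℕ) :
    ∀ (X : Over (SpecOfField k)) (ι : Type) [Finite ι] (_ : Nat.card ι ≤ n)
      (W : ι → Over (SpecOfField k)) (f : ∀ i, W i ⟶ X)
      (_ : ∀ i, IsImmersion (f i).left)
      (_ : Pairwise fun i i' => Disjoint (Set.range (f i).left.base)
        (Set.range (f i').left.base))
      (_ : ⋃ i, Set.range (f i).left.base = Set.univ)
      (_ : ∀ i i',
        (Set.range (f i).left.base ∩ closure (Set.range (f i').left.base)).Nonempty →
        Set.range (f i).left.base ⊆ closure (Set.range (f i').left.base))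
      (_ : ∀ i, IsJLinearScheme k (W i)), IsJLinearScheme k X := by
  induction n with
  | zero =>
    intro X ι hfin hcard W f _ _ hcover _ _
    have hι : IsEmpty ι := by
      rcases Nat.card_eq_zero.mp (Nat.le_zero.mp hcard) with h | h
      · exact h
      · exact absurd hfin h.not_finite
    rw [Set.iUnion_of_empty] at hcover
    exact ⟨0, IsJLinear.empty X (Set.univ_eq_empty_iff.mp hcover.symm)⟩
  | succ n ih =>
    intro X ι hfin hcard W f himm hdisj hcover hbdry hlin
    classical
    by_cases hι : IsEmpty ι
    · rw [Set.iUnion_of_empty] at hcover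
      exact ⟨0, IsJLinear.empty X (Set.univ_eq_empty_iff.mp hcover.symm)⟩
    have hne : Nonempty ι := not_isEmpty_iff.mp hι
    have hA : ∀ i, IsLocallyClosed (Set.range (f i).left.base) := by
      intro i
      haveI := himm i
      exact (f i).left.isLocallyClosed_range
    -- choose a stratum with minimal closure; its image is closed
    obtain ⟨i₀, -, hmin'⟩ := Set.Finite.exists_minimalFor
      (fun i => closure (Set.range (f i).left.base)) Set.univ Set.finite_univ
      Set.univ_nonempty
    have hmin : ∀ i ∈ (Set.univ : Set ι), closure (Set.range (f i).left.base) ⊆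
        closure (Set.range (f i₀).left.base) →
        closure (Set.range (f i₀).left.base) = closure (Set.range (f i).left.base) :=
      fun i hi h => subset_antisymm (hmin' hi h) h
    have hclosed : IsClosed (Set.range (f i₀).left.base) := by
      rw [← closure_subset_iff_isClosed]
      intro x hx
      obtain ⟨i', hxi'⟩ := Set.mem_iUnion.mp (hcover ▸ Set.mem_univ x :
        x ∈ ⋃ i, Set.range (f i).left.base)
      have hsub := hbdry i' i₀ ⟨x, hxi', hx⟩
      have hcls : closure (Set.range (f i').left.base) ⊆
          closure (Set.range (f i₀).left.base) := closure_minimal hsub isClosed_closure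
      have heq := hmin i' (Set.mem_univ _) hcls
      by_cases hii : i' = i₀
      · subst hii; exact hxi'
      · exfalso
        obtain ⟨O, hO, hrepr⟩ := JL_locallyClosed_eq (hA i')
        have hxO : x ∈ O := (hrepr ▸ hxi').1
        obtain ⟨z, hzO, hz₀⟩ := mem_closure_iff.mp hx O hO hxO
        have hzc : z ∈ closure (Set.range (f i').left.base) := by
          rw [← heq]; exact subset_closure hz₀
        have hzi' : z ∈ Set.range (f i').left.base := by
          rw [hrepr]; exact ⟨hzO, hzc⟩
        exact Set.disjoint_left.mp (hdisj hii) hzi' hz₀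
    haveI := himm i₀
    have hci₀ : IsClosedImmersion (f i₀).left :=
      IsClosedImmersion.of_isPreimmersion _ hclosed
    -- restrict to the open complement
    let V : X.left.Opens := ⟨(Set.range (f i₀).left.base)ᶜ, hclosed.isOpen_compl⟩
    let X' : Over (SpecOfField k) := Over.mk (V.ι ≫ X.hom)
    have hVrange : Set.range V.ι.base = ((Set.range (f i₀).left.base)ᶜ : Set _) :=
      Scheme.Opens.range_ι V
    have hsub : ∀ i : ι, i ≠ i₀ →
        Set.range (f i).left.base ⊆ Set.range V.ι.base := by
      intro i hi x hx
      rw [hVrange]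
      exact fun hxA => Set.disjoint_left.mp (hdisj hi) hx hxA
    let g : ∀ i : {i : ι // i ≠ i₀}, (W i.1).left ⟶ X'.left :=
      fun i => IsOpenImmersion.lift V.ι (f i.1).left (hsub i.1 i.2)
    have hfac : ∀ i, g i ≫ V.ι = (f i.1).left :=
      fun i => IsOpenImmersion.lift_fac _ _ _
    have hrange : ∀ i, Set.range (f i.1).left.base = V.ι.base '' Set.range (g i).base := by
      intro i
      rw [← hfac i]
      simp only [Scheme.Hom.comp_base, TopCat.coe_comp, Set.range_comp]
      rfl
    have hpt : ∀ i x, (f i.1).left.base x = V.ι.base ((g i).base x) := by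
      intro i x
      conv_lhs => rw [← hfac i]
      simp only [Scheme.Hom.comp_base, TopCat.coe_comp, Function.comp_apply]
    have hinj : Function.Injective V.ι.base := V.ι.isOpenEmbedding.injective
    have hemb : Topology.IsEmbedding V.ι.base := V.ι.isOpenEmbedding.isEmbedding
    let f' : ∀ i : {i : ι // i ≠ i₀}, W i.1 ⟶ X' :=
      fun i => Over.homMk (g i) (by rw [show X'.hom = V.ι ≫ X.hom from rfl, ← Category.assoc, hfac i, Over.w])
    have himm' : ∀ i, IsImmersion (f' i).left := by
      intro i
      haveI := himm i.1
      haveI : IsImmersion (g i ≫ V.ι) := by rw [hfac i]; infer_instance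
      exact IsImmersion.of_comp (g i) V.ι
    have hdisj' : Pairwise fun (i i' : {i : ι // i ≠ i₀}) =>
        Disjoint (Set.range (f' i).left.base) (Set.range (f' i').left.base) := by
      intro i i' hii
      rw [Set.disjoint_left]
      intro y hy hy'
      have m1 : V.ι.base y ∈ Set.range (f i.1).left.base := by
        rw [hrange i]; exact Set.mem_image_of_mem _ hy
      have m2 : V.ι.base y ∈ Set.range (f i'.1).left.base := by
        rw [hrange i']; exact Set.mem_image_of_mem _ hy'
      exact Set.disjoint_left.mp (hdisj fun hh => hii (Subtype.ext hh)) m1 m2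
    have hcover' : ⋃ i, Set.range (f' i).left.base = Set.univ := by
      apply Set.eq_univ_of_forall
      intro y
      obtain ⟨i, w, hw⟩ := Set.mem_iUnion.mp (hcover ▸ Set.mem_univ (V.ι.base y) :
        V.ι.base y ∈ ⋃ i, Set.range (f i).left.base)
      have hii : i ≠ i₀ := by
        rintro rfl
        have hmem : V.ι.base y ∈ Set.range V.ι.base := Set.mem_range_self y
        rw [hVrange] at hmem
        exact hmem ⟨w, hw⟩
      refine Set.mem_iUnion.mpr ⟨⟨i, hii⟩, w, hinj ?_⟩
      show V.ι.base ((g ⟨i, hii⟩).base w) = V.ι.base y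
      rw [← hpt ⟨i, hii⟩ w]
      exact hw
    have hcl : ∀ i : {i : ι // i ≠ i₀}, closure (Set.range (g i).base) =
        V.ι.base ⁻¹' closure (V.ι.base '' Set.range (g i).base) :=
      fun i => hemb.closure_eq_preimage_closure_image _
    have hbdry' : ∀ i i' : {i : ι // i ≠ i₀},
        (Set.range (f' i).left.base ∩ closure (Set.range (f' i').left.base)).Nonempty →
        Set.range (f' i).left.base ⊆ closure (Set.range (f' i').left.base) := by
      intro i i' hnon
      obtain ⟨y, hy1, hy2⟩ := hnon
      replace hy2 : y ∈ closure (Set.range (g i').base) := hy2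
      have hy2' : V.ι.base y ∈ closure (V.ι.base '' Set.range (g i').base) := by
        rw [hcl i'] at hy2
        exact hy2
      have hb : Set.range (f i.1).left.base ⊆ closure (Set.range (f i'.1).left.base) := by
        refine hbdry i.1 i'.1 ⟨V.ι.base y, ?_, ?_⟩
        · rw [hrange i]; exact Set.mem_image_of_mem _ hy1
        · rw [hrange i']; exact hy2'
      intro z hz
      show z ∈ closure (Set.range (g i').base)
      rw [hcl i']
      show V.ι.base z ∈ closure (V.ι.base '' Set.range (g i').base)
      rw [← hrange i']
      apply hb
      rw [hrange i]
      exact Set.mem_image_of_mem _ hz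
    haveI : Fintype ι := Fintype.ofFinite ι
    have hcard' : Nat.card {i : ι // i ≠ i₀} ≤ n := by
      have h1 : Fintype.card {i : ι // i ≠ i₀} < Fintype.card ι :=
        Fintype.card_subtype_lt (x := i₀) (by simp)
      have h2 : Nat.card ι = Fintype.card ι := Nat.card_eq_fintype_card
      rw [Nat.card_eq_fintype_card]
      omega
    have hX' : IsJLinearScheme k X' :=
      ih X' {i : ι // i ≠ i₀} hcard' (fun i => W i.1) f' himm' hdisj' hcover' hbdry'
        (fun i => hlin i.1)
    refine JL_glue (f i₀) (Over.homMk V.ι rfl) hci₀ ?_ ?_ (hlin i₀) hX'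
    · show IsOpenImmersion V.ι
      infer_instance
    · show Set.range V.ι.base = (Set.range (f i₀).left.base)ᶜ
      rw [hVrange]

/-- Let `X` be a scheme, separated and of finite type over a field `k`, which
admits a finite stratification by locally closed J-linear subschemes `W i ↪ X` (pairwise
disjoint locally closed strata covering `X` and satisfying the boundary condition). Then `X`
is J-linear. -/
theorem isJLinearScheme_of_finite_stratification (k : Type) [Field k]
    (X : Over (SpecOfField k)) [IsSeparated X.hom] [LocallyOfFiniteType X.hom]
    [QuasiCompact X.hom]
    (ι : Type) [Finite ι] (W : ι → Over (SpecOfField k)) (f : ∀ i, W i ⟶ X)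
    (himm : ∀ i, IsLocallyClosedImmersion (f i).left)
    (hdisj : Pairwise fun i i' => Disjoint (Set.range (f i).left.base)
      (Set.range (f i').left.base))
    (hcover : ⋃ i, Set.range (f i).left.base = Set.univ)
    (hbdry : ∀ i i',
      (Set.range (f i).left.base ∩ closure (Set.range (f i').left.base)).Nonempty →
      Set.range (f i).left.base ⊆ closure (Set.range (f i').left.base))
    (hlin : ∀ i, IsJLinearScheme k (W i)) :
    IsJLinearScheme k X := by
  have himm' : ∀ i, IsImmersion (f i).left := fun i => IsImmersion.isImmersion_iff_exists.mpr (himm i)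
  exact JL_aux k (Nat.card ι) X ι le_rfl W f himm' hdisj hcover hbdry hlin
end
end

section
/- Let k be a field, let X be an n-J-linear k-scheme and let Y be an m-J-linear k-scheme. Then the fiber product X ×_k Y is an (n+m)-J-linear k-scheme. -/
open AlgebraicGeometry CategoryTheory CategoryTheory.Limits

noncomputable section

/-- The fiber product `X ×_k Y` of two `k`-schemes, as a `k`-scheme. -/
def fiberProdOver {k : Type} [Field k] (X Y : Over (SpecOfField k)) : Over (SpecOfField k) :=
  Over.mk (pullback.fst X.hom Y.hom ≫ X.hom)

section Aux

variable {k : Type} [Field k]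

lemma range_isoComp {A B C : Scheme} (e : A ⟶ B) [IsIso e] (g : B ⟶ C) :
    Set.range (e ≫ g).base = Set.range g.base := by
  have hsurj : Function.Surjective e.base := (Scheme.homeoOfIso (asIso e)).surjective
  rw [Scheme.Hom.comp_base, TopCat.coe_comp, Set.range_comp, Set.range_eq_univ.mpr hsurj,
    Set.image_univ]

lemma bij_base {A B : Scheme} (e : A ⟶ B) [IsIso e] : Function.Bijective e.base :=
  (Scheme.homeoOfIso (asIso e)).bijective

/-- map on first factor -/
def mapLeft {Z W : Over (SpecOfField k)} (f : Z ⟶ W) (Y : Over (SpecOfField k)) :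
    fiberProdOver Z Y ⟶ fiberProdOver W Y :=
  Over.homMk (pullback.map Z.hom Y.hom W.hom Y.hom f.left (𝟙 _) (𝟙 _)
      (by simp [Over.w]) (by simp))
    (by show _ ≫ pullback.fst W.hom Y.hom ≫ W.hom = pullback.fst Z.hom Y.hom ≫ Z.hom
        exact (pullback.lift_fst_assoc _ _ _ _).trans (by rw [Category.assoc, Over.w]))

lemma mapLeft_left {Z W : Over (SpecOfField k)} (f : Z ⟶ W) (Y : Over (SpecOfField k)) :
    (mapLeft f Y).left = pullback.map Z.hom Y.hom W.hom Y.hom f.left (𝟙 _) (𝟙 _)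
      (by simp [Over.w]) (by simp) := rfl

lemma mapLeft_isPullback {Z W : Over (SpecOfField k)} (f : Z ⟶ W) (Y : Over (SpecOfField k)) :
    IsPullback (mapLeft f Y).left (pullback.fst Z.hom Y.hom) (pullback.fst W.hom Y.hom) f.left := by
  apply IsPullback.of_right (h₁₂ := pullback.snd W.hom Y.hom) (v₁₃ := Y.hom) (h₂₂ := W.hom)
  · have h1 : (mapLeft f Y).left ≫ pullback.snd W.hom Y.hom = pullback.snd Z.hom Y.hom :=
      (pullback.lift_snd _ _ _).trans (Category.comp_id _)
    rw [Over.w]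
    exact (congrArg (fun t => IsPullback t (pullback.fst Z.hom Y.hom) Y.hom Z.hom) h1).mpr
      (IsPullback.of_hasPullback Z.hom Y.hom).flip
  · exact pullback.lift_fst _ _ _
  · exact (IsPullback.of_hasPullback W.hom Y.hom).flip

lemma mapLeft_prop (P : MorphismProperty Scheme) [P.IsStableUnderBaseChange]
    {Z W : Over (SpecOfField k)} (f : Z ⟶ W) (Y : Over (SpecOfField k)) (hf : P f.left) :
    P (mapLeft f Y).left :=
  MorphismProperty.of_isPullback (mapLeft_isPullback f Y).flip hf

lemma mapLeft_range {Z W : Over (SpecOfField k)} (f : Z ⟶ W) (Y : Over (SpecOfField k)) :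
    Set.range (mapLeft f Y).left.base
      = (pullback.fst W.hom Y.hom).base ⁻¹' Set.range f.left.base := by
  have h := (mapLeft_isPullback f Y).isoPullback_hom_fst
  rw [← h, range_isoComp]
  exact AlgebraicGeometry.Scheme.Pullback.range_fst _ _

/-- map on second factor -/
def mapRight (X : Over (SpecOfField k)) {Z W : Over (SpecOfField k)} (f : Z ⟶ W) :
    fiberProdOver X Z ⟶ fiberProdOver X W :=
  Over.homMk (pullback.map X.hom Z.hom X.hom W.hom (𝟙 _) f.left (𝟙 _)
      (by simp) (by simp [Over.w]))
    (by show _ ≫ pullback.fst X.hom W.hom ≫ X.hom = pullback.fst X.hom Z.hom ≫ X.hom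
        exact (pullback.lift_fst_assoc _ _ _ _).trans (by rw [Category.comp_id]))

lemma mapRight_left (X : Over (SpecOfField k)) {Z W : Over (SpecOfField k)} (f : Z ⟶ W) :
    (mapRight X f).left = pullback.map X.hom Z.hom X.hom W.hom (𝟙 _) f.left (𝟙 _)
      (by simp) (by simp [Over.w]) := rfl

lemma mapRight_isPullback (X : Over (SpecOfField k)) {Z W : Over (SpecOfField k)} (f : Z ⟶ W) :
    IsPullback (mapRight X f).left (pullback.snd X.hom Z.hom) (pullback.snd X.hom W.hom) f.left := by
  apply IsPullback.of_right (h₁₂ := pullback.fst X.hom W.hom) (v₁₃ := X.hom) (h₂₂ := W.hom)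
  · have h1 : (mapRight X f).left ≫ pullback.fst X.hom W.hom = pullback.fst X.hom Z.hom :=
      (pullback.lift_fst _ _ _).trans (Category.comp_id _)
    rw [Over.w]
    exact (congrArg (fun t => IsPullback t (pullback.snd X.hom Z.hom) X.hom Z.hom) h1).mpr
      (IsPullback.of_hasPullback X.hom Z.hom)
  · exact pullback.lift_snd _ _ _
  · exact IsPullback.of_hasPullback X.hom W.hom

lemma mapRight_prop (P : MorphismProperty Scheme) [P.IsStableUnderBaseChange]
    (X : Over (SpecOfField k)) {Z W : Over (SpecOfField k)} (f : Z ⟶ W) (hf : P f.left) :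
    P (mapRight X f).left :=
  MorphismProperty.of_isPullback (mapRight_isPullback X f).flip hf

lemma mapRight_range (X : Over (SpecOfField k)) {Z W : Over (SpecOfField k)} (f : Z ⟶ W) :
    Set.range (mapRight X f).left.base
      = (pullback.snd X.hom W.hom).base ⁻¹' Set.range f.left.base := by
  have h := (mapRight_isPullback X f).isoPullback_hom_fst
  rw [← h, range_isoComp]
  exact AlgebraicGeometry.Scheme.Pullback.range_fst _ _

lemma mapLeft_compl {Z U W Y : Over (SpecOfField k)} (i : Z ⟶ W) (j : U ⟶ W)
    (hcompl : Set.range j.left.base = (Set.range i.left.base)ᶜ) :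
    Set.range (mapLeft j Y).left.base = (Set.range (mapLeft i Y).left.base)ᶜ := by
  rw [mapLeft_range, mapLeft_range, hcompl, Set.preimage_compl]; rfl

lemma mapRight_compl (X : Over (SpecOfField k)) {Z U W : Over (SpecOfField k)} (i : Z ⟶ W) (j : U ⟶ W)
    (hcompl : Set.range j.left.base = (Set.range i.left.base)ᶜ) :
    Set.range (mapRight X j).left.base = (Set.range (mapRight X i).left.base)ᶜ := by
  rw [mapRight_range, mapRight_range, hcompl, Set.preimage_compl]; rfl

lemma isJLinear_of_iso {n : ℕ} {Y Y' : Over (SpecOfField k)} (h : IsJLinear k n Y)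
    (e : Y ≅ Y') : IsJLinear k n Y' := by
  induction h generalizing Y' with
  | empty Y h =>
    exact IsJLinear.empty _ (Function.isEmpty (f := ((e.inv.left.base : _ → _))) )
  | affine Y N h =>
    exact IsJLinear.affine _ N ⟨e.symm.trans h.some⟩
  | openCompl n Y Z X i j hi hj hcompl hZ hX ihZ ihX =>
    letI : IsIso e.inv.left := inferInstanceAs (IsIso ((Over.forget _).mapIso e.symm).hom)
    refine IsJLinear.openCompl n Y' Z X i (e.inv ≫ j) hi ?_ ?_ hZ hX
    · rw [Over.comp_left]; infer_instance
    · rw [Over.comp_left, range_isoComp, hcompl]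
  | closedPart n Y Z U i j hi hj hcompl hZ hU ihZ ihU =>
    letI : IsIso e.hom.left := inferInstanceAs (IsIso ((Over.forget _).mapIso e).hom)
    refine IsJLinear.closedPart n Y' Z U (i ≫ e.hom) (j ≫ e.hom) ?_ ?_ ?_ hZ hU
    · rw [Over.comp_left]; infer_instance
    · rw [Over.comp_left]; infer_instance
    · rw [Over.comp_left, Over.comp_left, Scheme.Hom.comp_base, Scheme.Hom.comp_base,
        TopCat.coe_comp, TopCat.coe_comp, Set.range_comp, Set.range_comp, hcompl,
        Set.image_compl_eq (bij_base e.hom.left)]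

lemma isJLinear_of_isEmpty {Y : Over (SpecOfField k)} (h : IsEmpty Y.left.carrier) :
    ∀ n, IsJLinear k n Y := by
  intro n
  induction n with
  | zero => exact IsJLinear.empty _ h
  | succ n ih =>
    refine IsJLinear.closedPart n Y Y Y (𝟙 Y) (𝟙 Y) ?_ ?_ ?_ ih ih
    · rw [Over.id_left]; infer_instance
    · rw [Over.id_left]; infer_instance
    · ext x; exact h.elim x

lemma fiberProd_isEmpty_left {X Y : Over (SpecOfField k)} (h : IsEmpty X.left.carrier) :
    IsEmpty (fiberProdOver X Y).left.carrier :=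
  haveI : IsEmpty ((𝟭 Scheme).obj X.left).carrier := h
  Function.isEmpty (f := ((pullback.fst X.hom Y.hom).base : _ → _))

lemma fiberProd_isEmpty_right {X Y : Over (SpecOfField k)} (h : IsEmpty Y.left.carrier) :
    IsEmpty (fiberProdOver X Y).left.carrier :=
  haveI : IsEmpty ((𝟭 Scheme).obj Y.left).carrier := h
  Function.isEmpty (f := ((pullback.snd X.hom Y.hom).base : _ → _))

def fiberProdCongr {X X' Y Y' : Over (SpecOfField k)} (eX : X ≅ X') (eY : Y ≅ Y') :
    fiberProdOver X Y ≅ fiberProdOver X' Y' := by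
  letI : IsIso eX.hom.left := inferInstanceAs (IsIso ((Over.forget _).mapIso eX).hom)
  letI : IsIso eY.hom.left := inferInstanceAs (IsIso ((Over.forget _).mapIso eY).hom)
  refine Over.isoMk (@asIso _ _ _ _ (pullback.map X.hom Y.hom X'.hom Y'.hom eX.hom.left eY.hom.left
    (𝟙 _) (by simp [Over.w]) (by simp [Over.w])) (pullback.map_isIso ..)) ?_
  show _ ≫ pullback.fst X'.hom Y'.hom ≫ X'.hom = pullback.fst X.hom Y.hom ≫ X.hom
  exact (pullback.lift_fst_assoc _ _ _ _).trans (by rw [Category.assoc, Over.w])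

open TensorProduct in
def algEquivTensor (k : Type) [Field k] (N M : ℕ) :
    (MvPolynomial (Fin N) k ⊗[k] MvPolynomial (Fin M) k) ≃ₐ[k] MvPolynomial (Fin (N + M)) k :=
  ((MvPolynomial.algebraTensorAlgEquiv k (σ := Fin M)
      (A := MvPolynomial (Fin N) k)).restrictScalars k).trans
    (((MvPolynomial.sumAlgEquiv k (Fin M) (Fin N)).symm).trans
      (MvPolynomial.renameEquiv k ((finSumFinEquiv (m := M) (n := N)).trans
        (finCongr (Nat.add_comm M N)))))

def specIsoOfAlgEquiv {B C : Type} [CommRing B] [CommRing C] [Algebra k B] [Algebra k C]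
    (e : B ≃ₐ[k] C) : Spec (CommRingCat.of B) ≅ Spec (CommRingCat.of C) where
  hom := Spec.map (CommRingCat.ofHom (e.symm : C →+* B))
  inv := Spec.map (CommRingCat.ofHom (e : B →+* C))
  hom_inv_id := by
    rw [← Spec.map_comp]
    have : (CommRingCat.ofHom (e : B →+* C) ≫ CommRingCat.ofHom (e.symm : C →+* B))
        = 𝟙 (CommRingCat.of B) := by ext x; exact e.symm_apply_apply x
    rw [this, Spec.map_id]
  inv_hom_id := by
    rw [← Spec.map_comp]
    have : (CommRingCat.ofHom (e.symm : C →+* B) ≫ CommRingCat.ofHom (e : B →+* C))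
        = 𝟙 (CommRingCat.of C) := by ext x; exact e.apply_symm_apply x
    rw [this, Spec.map_id]

def overIsoOfAlgEquiv {B C : Type} [CommRing B] [CommRing C] [Algebra k B] [Algebra k C]
    (e : B ≃ₐ[k] C) :
    (Over.mk (Spec.map (CommRingCat.ofHom (algebraMap k B))) : Over (SpecOfField k))
      ≅ Over.mk (Spec.map (CommRingCat.ofHom (algebraMap k C))) :=
  Over.isoMk (specIsoOfAlgEquiv e) (by
    show Spec.map (CommRingCat.ofHom (e.symm : C →+* B)) ≫
      Spec.map (CommRingCat.ofHom (algebraMap k C)) = Spec.map (CommRingCat.ofHom (algebraMap k B))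
    rw [← Spec.map_comp]
    congr 1
    ext x
    exact e.symm.commutes x)

open TensorProduct in
def affineTensorOverIso (k : Type) [Field k] (N M : ℕ) :
    fiberProdOver (AffineSpaceOver k N) (AffineSpaceOver k M)
      ≅ (Over.mk (Spec.map (CommRingCat.ofHom
          (algebraMap k (MvPolynomial (Fin N) k ⊗[k] MvPolynomial (Fin M) k))))
            : Over (SpecOfField k)) := by
  refine Over.isoMk
    (pullbackSpecIso k (MvPolynomial (Fin N) k) (MvPolynomial (Fin M) k)) ?_
  show (pullbackSpecIso k (MvPolynomial (Fin N) k) (MvPolynomial (Fin M) k)).hom ≫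
      Spec.map (CommRingCat.ofHom
        (algebraMap k (MvPolynomial (Fin N) k ⊗[k] MvPolynomial (Fin M) k)))
    = pullback.fst (AffineSpaceOver k N).hom (AffineSpaceOver k M).hom ≫ (AffineSpaceOver k N).hom
  have h1 : (CommRingCat.ofHom
        (algebraMap k (MvPolynomial (Fin N) k ⊗[k] MvPolynomial (Fin M) k)))
      = CommRingCat.ofHom (algebraMap k (MvPolynomial (Fin N) k)) ≫
        CommRingCat.ofHom (Algebra.TensorProduct.includeLeftRingHom
          (R := k) (A := MvPolynomial (Fin N) k) (B := MvPolynomial (Fin M) k)) := by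
    ext x
    simp [Algebra.TensorProduct.algebraMap_apply]
  rw [h1, Spec.map_comp, ← Category.assoc, pullbackSpecIso_hom_fst]
  rfl

def affineProdIso (k : Type) [Field k] (N M : ℕ) :
    fiberProdOver (AffineSpaceOver k N) (AffineSpaceOver k M) ≅ AffineSpaceOver k (N + M) :=
  (affineTensorOverIso k N M).trans (overIsoOfAlgEquiv (algEquivTensor k N M))


end Aux

/-- If `X` is an `n`-J-linear `k`-scheme and `Y` is an `m`-J-linear
`k`-scheme, then the fiber product `X ×_k Y` is `(n + m)`-J-linear. -/
theorem isJLinear_fiberProd (k : Type) [Field k] (X Y : Over (SpecOfField k)) (n m : ℕ)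
    (hX : IsJLinear k n X) (hY : IsJLinear k m Y) :
    IsJLinear k (n + m) (fiberProdOver X Y) := by
  induction hX with
  | empty X' hE => exact isJLinear_of_isEmpty (fiberProd_isEmpty_left hE) _
  | affine X' N hN =>
    rw [Nat.zero_add]
    induction hY with
    | empty Y' hE => exact IsJLinear.empty _ (fiberProd_isEmpty_right hE)
    | affine Y' M hM =>
      exact IsJLinear.affine _ (N + M)
        ⟨(fiberProdCongr hN.some hM.some).trans (affineProdIso k N M)⟩
    | openCompl m' Y' Z W i j hi hj hcompl hZ hW ihZ ihW =>
      exact IsJLinear.openCompl m' _ (fiberProdOver X' Z) (fiberProdOver X' W)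
        (mapRight X' i) (mapRight X' j)
        (mapRight_prop @IsClosedImmersion X' i hi) (mapRight_prop @IsOpenImmersion X' j hj)
        (mapRight_compl X' i j hcompl) ihZ ihW
    | closedPart m' Y' Z U i j hi hj hcompl hZ hU ihZ ihU =>
      exact IsJLinear.closedPart m' _ (fiberProdOver X' Z) (fiberProdOver X' U)
        (mapRight X' i) (mapRight X' j)
        (mapRight_prop @IsClosedImmersion X' i hi) (mapRight_prop @IsOpenImmersion X' j hj)
        (mapRight_compl X' i j hcompl) ihZ ihU
  | openCompl n' X' Z W i j hi hj hcompl hZ hW ihZ ihW =>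
    have e : n' + 1 + m = (n' + m) + 1 := by omega
    rw [e]
    exact IsJLinear.openCompl (n' + m) _ (fiberProdOver Z Y) (fiberProdOver W Y)
      (mapLeft i Y) (mapLeft j Y)
      (mapLeft_prop @IsClosedImmersion i Y hi) (mapLeft_prop @IsOpenImmersion j Y hj)
      (mapLeft_compl i j hcompl) ihZ ihW
  | closedPart n' X' Z U i j hi hj hcompl hZ hU ihZ ihU =>
    have e : n' + 1 + m = (n' + m) + 1 := by omega
    rw [e]
    exact IsJLinear.closedPart (n' + m) _ (fiberProdOver Z Y) (fiberProdOver U Y)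
      (mapLeft i Y) (mapLeft j Y)
      (mapLeft_prop @IsClosedImmersion i Y hi) (mapLeft_prop @IsOpenImmersion j Y hj)
      (mapLeft_compl i j hcompl) ihZ ihU
end
end

section
/- Let k be a field and let Y be a k-scheme that is n-T-linear for some n ≥ 0. Then Y is J-linear. -/
open AlgebraicGeometry CategoryTheory CategoryTheory.Limits

noncomputable section

/-- `IsTLinear k n Y` says that the `k`-scheme `Y` is `n`-T-linear:
`Y` is `0`-T-linear if it is empty or isomorphic (as a `k`-scheme) to some `𝔸^N_k`, and
`Y` is `(n+1)`-T-linear if either `Y` is the open complement `𝔸^N_k \ Z` of a closed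
immersion `Z ↪ 𝔸^N_k` with `Z` `n`-T-linear, or `Y` admits a finite stratification by
`n`-T-linear schemes. -/
inductive IsTLinear (k : Type) [Field k] : ℕ → Over (SpecOfField k) → Prop
  | empty (Y : Over (SpecOfField k)) (h : IsEmpty Y.left.carrier) : IsTLinear k 0 Y
  | affine (Y : Over (SpecOfField k)) (N : ℕ) (h : Nonempty (Y ≅ AffineSpaceOver k N)) :
      IsTLinear k 0 Y
  | openCompl (n : ℕ) (Y Z : Over (SpecOfField k)) (N : ℕ)
      (i : Z ⟶ AffineSpaceOver k N) (j : Y ⟶ AffineSpaceOver k N)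
      (hi : IsClosedImmersion i.left) (hj : IsOpenImmersion j.left)
      (hcompl : Set.range j.left.base = (Set.range i.left.base)ᶜ)
      (hZ : IsTLinear k n Z) : IsTLinear k (n + 1) Y
  | strat (n : ℕ) (Y : Over (SpecOfField k)) (ι : Type) (hι : Finite ι)
      (W : ι → Over (SpecOfField k)) (f : ∀ i, W i ⟶ Y)
      (himm : ∀ i, IsLocallyClosedImmersion (f i).left)
      (hdisj : Pairwise fun i i' => Disjoint (Set.range (f i).left.base)
        (Set.range (f i').left.base))
      (hcover : ⋃ i, Set.range (f i).left.base = Set.univ)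
      (hbdry : ∀ i i',
        (Set.range (f i).left.base ∩ closure (Set.range (f i').left.base)).Nonempty →
        Set.range (f i).left.base ⊆ closure (Set.range (f i').left.base))
      (hW : ∀ i, IsTLinear k n (W i)) : IsTLinear k (n + 1) Y

/-! ### Auxiliary lemmas -/

/-- A purely topological antisymmetry lemma: two disjoint sets, each contained in the
closure of the other, with the first locally closed, forces the first to be empty. -/
lemma locallyClosed_antisym {X : Type*} [TopologicalSpace X] {A B : Set X}
    (hA : IsLocallyClosed A) (hd : Disjoint A B)
    (hAB : A ⊆ closure B) (hBA : B ⊆ closure A) : A = ∅ := by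
  obtain ⟨U, Z, hU, hZ, rfl⟩ := hA
  have hBU : B ∩ U = ∅ := by
    have h1 : B ∩ U ⊆ U ∩ Z := by
      intro x hx
      exact ⟨hx.2, hZ.closure_subset_iff.mpr Set.inter_subset_right (hBA hx.1)⟩
    have h2 : B ∩ U ⊆ (U ∩ Z) ∩ B := fun x hx => ⟨h1 hx, hx.1⟩
    rw [Set.disjoint_iff_inter_eq_empty.mp hd] at h2
    exact Set.subset_empty_iff.mp h2
  have hclB : closure B ⊆ Uᶜ :=
    closure_minimal (fun x hx hxU => Set.eq_empty_iff_forall_notMem.mp hBU x ⟨hx, hxU⟩)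
      hU.isClosed_compl
  have : U ∩ Z ⊆ Uᶜ := fun x hx => hclB (hAB hx)
  ext x
  simp only [Set.mem_empty_iff_false, iff_false]
  exact fun hx => (this hx) hx.1

/-- The range of a factoring morphism equals the preimage of the range. -/
lemma range_eq_preimage_of_fac {X Z Y : Scheme} (a : X ⟶ Y) (e : Z ⟶ Y) (ℓ : X ⟶ Z)
    (hfac : ℓ ≫ e = a) (he : Function.Injective e.base) :
    Set.range ℓ.base = e.base ⁻¹' (Set.range a.base) := by
  ext z
  constructor
  · rintro ⟨x, rfl⟩
    exact ⟨x, by rw [← hfac]; simp⟩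
  · rintro ⟨x, hx⟩
    refine ⟨x, he ?_⟩
    rw [← hx, ← hfac]; simp

lemma isEmpty_of_range_empty {X Y : Scheme} (g : X ⟶ Y) (h : Set.range g.base = ∅) :
    IsEmpty X.carrier :=
  ⟨fun x => Set.notMem_empty (g.base x) (h ▸ Set.mem_range_self x)⟩

/-- An empty `k`-scheme is `n`-J-linear for every `n`. -/
lemma jlinear_of_isEmpty {k : Type} [Field k] (Y : Over (SpecOfField k))
    (h : IsEmpty Y.left.carrier) : ∀ n, IsJLinear k n Y
  | 0 => .empty Y h
  | (n+1) => by
    have hall : ∀ (s t : Set Y.left.carrier), s = t := fun s t => by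
      ext x; exact h.elim x
    exact .closedPart n Y Y Y (𝟙 Y) (𝟙 Y)
      (inferInstanceAs (IsClosedImmersion (𝟙 Y.left)))
      (inferInstanceAs (IsOpenImmersion (𝟙 Y.left)))
      (hall _ _) (jlinear_of_isEmpty Y h n) (jlinear_of_isEmpty Y h n)

/-- J-linearity is monotone in the level. -/
lemma jlinear_succ {k : Type} [Field k] {n : ℕ} {Y : Over (SpecOfField k)}
    (h : IsJLinear k n Y) : IsJLinear k (n+1) Y := by
  have hbot : Set.range (Scheme.Opens.ι (⊥ : Y.left.Opens)).base = (∅ : Set Y.left.carrier) := by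
    rw [Scheme.Opens.range_ι]; simp
  refine .closedPart n Y Y (Over.mk (Scheme.Opens.ι (⊥ : Y.left.Opens) ≫ Y.hom)) (𝟙 Y)
    (Over.homMk (Scheme.Opens.ι (⊥ : Y.left.Opens)) rfl)
    (inferInstanceAs (IsClosedImmersion (𝟙 Y.left)))
    (inferInstanceAs (IsOpenImmersion (Scheme.Opens.ι (⊥ : Y.left.Opens)))) ?_ h
    (jlinear_of_isEmpty _ (isEmpty_of_range_empty _ hbot) n)
  · show Set.range (Scheme.Opens.ι (⊥ : Y.left.Opens)).base = (Set.range (𝟙 Y.left : _).base)ᶜ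
    rw [hbot, Scheme.Hom.id_base]
    simp

lemma jlinear_mono {k : Type} [Field k] {n m : ℕ} {Y : Over (SpecOfField k)}
    (hnm : n ≤ m) (h : IsJLinear k n Y) : IsJLinear k m Y := by
  induction hnm with
  | refl => exact h
  | step _ ih => exact jlinear_succ ih

/-- The key lemma: a scheme with a finite stratification by `m`-J-linear strata
is J-linear. -/
lemma strat_aux {k : Type} [Field k] (Y : Over (SpecOfField k)) (ι : Type) [Finite ι]
    (W : ι → Over (SpecOfField k)) (f : ∀ i, W i ⟶ Y)
    (himm : ∀ i, IsLocallyClosedImmersion (f i).left)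
    (hdisj : Pairwise fun i i' => Disjoint (Set.range (f i).left.base)
      (Set.range (f i').left.base))
    (hcover : ⋃ i, Set.range (f i).left.base = Set.univ)
    (hbdry : ∀ i i',
      (Set.range (f i).left.base ∩ closure (Set.range (f i').left.base)).Nonempty →
      Set.range (f i).left.base ⊆ closure (Set.range (f i').left.base))
    (m : ℕ) (hW : ∀ i, IsJLinear k m (W i)) : IsJLinearScheme k Y := by
  classical
  set R : ι → Set Y.left.carrier := fun i => Set.range (f i).left.base with hR
  -- each stratum is an immersion, hence has locally closed range
  have himmF : ∀ j, IsImmersion (f j).left := by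
    intro j
    obtain ⟨V, g, h, hg, hh, hfac⟩ := himm j
    rw [← hfac]
    infer_instance
  have hlc : ∀ j, IsLocallyClosed (R j) := fun j => (himmF j).isLocallyClosed_range
  haveI := Fintype.ofFinite ι
  set V : Finset ι → Set Y.left.carrier := fun S => ⋃ j ∈ S, R j with hV
  have main : ∀ (S : Finset ι),
      (∀ j ∈ S, (R j).Nonempty → ∀ j', R j ⊆ closure (R j') → j' ∈ S ∨ R j' = ∅) →
      ∀ (ho : IsOpen (V S)),
        IsJLinearScheme k (Over.mk (Scheme.Opens.ι (X := Y.left) ⟨V S, ho⟩ ≫ Y.hom)) := by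
    intro S
    induction S using Finset.strongInduction with
    | _ S IH =>
      intro hP ho
      by_cases hvs : ∀ j ∈ S, R j = ∅
      · -- everything empty: the scheme is empty
        have hVS : V S = ∅ := by
          apply Set.eq_empty_iff_forall_notMem.mpr
          intro x hx
          simp only [hV, Set.mem_iUnion] at hx
          obtain ⟨j, hj, hxj⟩ := hx
          rw [hvs j hj] at hxj
          exact hxj
        exact ⟨0, .empty _ (isEmpty_of_range_empty (Scheme.Opens.ι (X := Y.left) ⟨V S, ho⟩)
          ((Scheme.Opens.range_ι _).trans hVS))⟩
      · push_neg at hvs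
        obtain ⟨j0, hj0S, hj0⟩ := hvs
        -- pick a stratum i in S with minimal closure among nonempty ones
        obtain ⟨i, ⟨hiS, hiNe⟩, hmin0⟩ :=
          Set.Finite.exists_minimalFor (fun j => closure (R j))
            {j | j ∈ S ∧ (R j).Nonempty} (Set.toFinite _)
            ⟨j0, hj0S, hj0⟩
        -- minimality: any other stratum of S inside closure (R i) is empty
        have hmin : ∀ j ∈ S, j ≠ i → R j ⊆ closure (R i) → R j = ∅ := by
          intro j hj hne hsub
          by_contra hne2
          have hjNe : (R j).Nonempty := Set.nonempty_iff_ne_empty.mpr hne2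
          have h1 : closure (R j) ⊆ closure (R i) :=
            closure_minimal hsub isClosed_closure
          have h2 := @hmin0 j ⟨hj, hjNe⟩ h1
          -- h2 : closure (R i) = closure (R j)
          have := locallyClosed_antisym (hlc j) (hdisj hne) hsub
            (subset_closure.trans h2)
          exact hne2 this
        set S' : Finset ι := S.erase i with hS'
        -- the complement of V S' is the union of the remaining strata
        set C : Set Y.left.carrier := ⋃ j ∈ {j : ι | j ∉ S'}, R j with hC
        have hCcompl : (V S')ᶜ = C := by
          ext x
          constructor
          · intro hx
            have hxuniv : x ∈ ⋃ i, R i := by rw [hcover]; trivial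
            obtain ⟨j, hj⟩ := Set.mem_iUnion.mp hxuniv
            have hjnot : j ∉ S' := by
              intro hjin
              exact hx (Set.mem_biUnion hjin hj)
            exact Set.mem_biUnion hjnot hj
          · intro hx hx2
            obtain ⟨j, hj, hxj⟩ := Set.mem_iUnion₂.mp hx
            obtain ⟨l, hl, hxl⟩ := Set.mem_iUnion₂.mp hx2
            have : l ≠ j := fun h => hj (h ▸ hl)
            exact Set.disjoint_left.mp (hdisj this) hxl hxj
        have hCclosed : IsClosed C := by
          apply isClosed_of_closure_subset
          rw [hC, Set.Finite.closure_biUnion (Set.toFinite _)]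
          intro x hx
          obtain ⟨j, hj, hxj⟩ := Set.mem_iUnion₂.mp hx
          -- x ∈ closure (R j), j ∉ S'
          have hxuniv : x ∈ ⋃ i, R i := by rw [hcover]; trivial
          obtain ⟨l, hxl⟩ := Set.mem_iUnion.mp hxuniv
          by_cases hlS' : l ∈ S'
          · -- derive a contradiction
            have hRl : R l ⊆ closure (R j) := hbdry l j ⟨x, hxl, hxj⟩
            have hlS : l ∈ S := Finset.mem_of_mem_erase hlS'
            rcases hP l hlS ⟨x, hxl⟩ j hRl with hjS | hj0
            · have hji : j = i := by
                by_contra hji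
                exact hj (Finset.mem_erase.mpr ⟨hji, hjS⟩)
              rw [hji] at hRl
              have : R l = ∅ := hmin l hlS (Finset.ne_of_mem_erase hlS') hRl
              rw [this] at hxl
              exact absurd hxl (Set.notMem_empty x)
            · rw [hj0] at hxj
              simp at hxj
          · exact Set.mem_biUnion hlS' hxl
        have ho' : IsOpen (V S') := by
          rw [← isClosed_compl_iff, hCcompl]
          exact hCclosed
        -- the new "essentially upward closed" property for S'
        have hP' : ∀ j ∈ S', (R j).Nonempty → ∀ j', R j ⊆ closure (R j') →
            j' ∈ S' ∨ R j' = ∅ := by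
          intro j hj hjNe j' hsub
          rcases hP j (Finset.mem_of_mem_erase hj) hjNe j' hsub with hj'S | hj'
          · left
            refine Finset.mem_erase.mpr ⟨?_, hj'S⟩
            intro hj'i
            rw [hj'i] at hsub
            have := hmin j (Finset.mem_of_mem_erase hj) (Finset.ne_of_mem_erase hj) hsub
            exact (Set.nonempty_iff_ne_empty.mp hjNe) this
          · right; exact hj'
        obtain ⟨p, hp⟩ := IH S' (Finset.erase_ssubset hiS) hP' ho'
        -- assemble the schemes and morphisms
        set US : Y.left.Opens := ⟨V S, ho⟩ with hUS
        set US' : Y.left.Opens := ⟨V S', ho'⟩ with hUS'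
        have hRiVS : R i ⊆ V S := by
          intro x hx; exact Set.mem_biUnion hiS hx
        have hVS'VS : V S' ⊆ V S := by
          intro x hx
          obtain ⟨j, hj, hxj⟩ := Set.mem_iUnion₂.mp hx
          exact Set.mem_biUnion (Finset.mem_of_mem_erase hj) hxj
        have hinj : Function.Injective (Scheme.Opens.ι US).base := (Scheme.Opens.ι US).isOpenEmbedding.injective
        set ℓ : (W i).left ⟶ (Scheme.Opens.toScheme US) :=
          IsOpenImmersion.lift (Scheme.Opens.ι US) (f i).left
            (by rw [Scheme.Opens.range_ι]; exact hRiVS) with hℓ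
        have hfacℓ : ℓ ≫ (Scheme.Opens.ι US) = (f i).left := IsOpenImmersion.lift_fac _ _ _
        set jm : (Scheme.Opens.toScheme US') ⟶ (Scheme.Opens.toScheme US) :=
          IsOpenImmersion.lift (Scheme.Opens.ι US) (Scheme.Opens.ι US')
            (by rw [Scheme.Opens.range_ι, Scheme.Opens.range_ι]; exact hVS'VS) with hjm
        have hfacjm : jm ≫ (Scheme.Opens.ι US) = (Scheme.Opens.ι US') := IsOpenImmersion.lift_fac _ _ _
        have hrangeℓ : Set.range ℓ.base = (Scheme.Opens.ι US).base ⁻¹' (R i) :=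
          range_eq_preimage_of_fac _ _ _ hfacℓ hinj
        have hrangejm : Set.range jm.base = (Scheme.Opens.ι US).base ⁻¹' (V S') := by
          rw [range_eq_preimage_of_fac _ _ _ hfacjm hinj, Scheme.Opens.range_ι]
          rfl
        -- disjointness / decomposition facts
        have hdisjiS' : ∀ x, x ∈ V S' → x ∈ R i → False := by
          intro x hx1 hx2
          obtain ⟨j, hj, hxj⟩ := Set.mem_iUnion₂.mp hx1
          exact Set.disjoint_left.mp (hdisj (Finset.ne_of_mem_erase hj)) hxj hx2
        have hdecomp : ∀ x, x ∈ V S → x ∈ V S' ∨ x ∈ R i := by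
          intro x hx
          obtain ⟨j, hj, hxj⟩ := Set.mem_iUnion₂.mp hx
          by_cases hji : j = i
          · right; rw [← hji]; exact hxj
          · left; exact Set.mem_biUnion (Finset.mem_erase.mpr ⟨hji, hj⟩) hxj
        have hmemVS : ∀ x : (Scheme.Opens.toScheme US).carrier, (Scheme.Opens.ι US).base x ∈ V S := by
          intro x
          have : (Scheme.Opens.ι US).base x ∈ Set.range (Scheme.Opens.ι US).base := Set.mem_range_self x
          rw [Scheme.Opens.range_ι] at this
          exact this
        have hcompl : Set.range jm.base = (Set.range ℓ.base)ᶜ := by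
          rw [hrangeℓ, hrangejm]
          ext x
          simp only [Set.mem_preimage, Set.mem_compl_iff]
          constructor
          · intro h1 h2
            exact hdisjiS' _ h1 h2
          · intro h1
            rcases hdecomp _ (hmemVS x) with h | h
            · exact h
            · exact absurd h h1
        -- ℓ is a closed immersion
        haveI : IsImmersion (f i).left := himmF i
        haveI : IsPreimmersion (ℓ ≫ (Scheme.Opens.ι US)) := by rw [hfacℓ]; infer_instance
        haveI : IsPreimmersion ℓ := IsPreimmersion.of_comp ℓ (Scheme.Opens.ι US)
        have hiCl : IsClosedImmersion ℓ := by
          apply IsClosedImmersion.of_isPreimmersion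
          rw [hrangeℓ]
          have : (Scheme.Opens.ι US).base ⁻¹' (R i) = ((Scheme.Opens.ι US).base ⁻¹' (V S'))ᶜ := by
            ext x
            simp only [Set.mem_preimage, Set.mem_compl_iff]
            constructor
            · intro h1 h2
              exact hdisjiS' _ h2 h1
            · intro h1
              rcases hdecomp _ (hmemVS x) with h | h
              · exact absurd h h1
              · exact h
          rw [this]
          exact (ho'.preimage (Scheme.Opens.ι US).base.hom.continuous).isClosed_compl
        -- jm is an open immersion
        haveI : IsOpenImmersion (jm ≫ (Scheme.Opens.ι US)) := by rw [hfacjm]; infer_instance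
        have hjOp : IsOpenImmersion jm := IsOpenImmersion.of_comp jm (Scheme.Opens.ι US)
        -- Over morphisms
        refine ⟨(max m p) + 1,
          .closedPart (max m p) (Over.mk ((Scheme.Opens.ι US) ≫ Y.hom)) (W i) (Over.mk ((Scheme.Opens.ι US') ≫ Y.hom))
            (Over.homMk ℓ ?_) (Over.homMk jm ?_) hiCl hjOp hcompl
            (jlinear_mono (le_max_left m p) (hW i))
            (jlinear_mono (le_max_right m p) hp)⟩
        · show ℓ ≫ (Scheme.Opens.ι US) ≫ Y.hom = (W i).hom
          rw [← Category.assoc, hfacℓ]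
          exact Over.w (f i)
        · show jm ≫ (Scheme.Opens.ι US) ≫ Y.hom = (Scheme.Opens.ι US') ≫ Y.hom
          rw [← Category.assoc, hfacjm]
  -- apply to the full index set
  have hVuniv : V Finset.univ = Set.univ := by
    rw [show V Finset.univ = ⋃ i, R i from by simp [hV]]
    exact hcover
  have hounivopen : IsOpen (V Finset.univ) := by rw [hVuniv]; exact isOpen_univ
  obtain ⟨p, hp⟩ := main Finset.univ
    (fun j _ _ j' _ => Or.inl (Finset.mem_univ j')) hounivopen
  -- Y is J-linear since it has a surjective closed immersion from the restriction
  set Uu : Y.left.Opens := ⟨V Finset.univ, hounivopen⟩ with hUu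
  have hClu : IsClosedImmersion (Scheme.Opens.ι Uu) := by
    apply IsClosedImmersion.of_isPreimmersion
    rw [Scheme.Opens.range_ι]
    show IsClosed (V Finset.univ)
    rw [hVuniv]
    exact isClosed_univ
  have hbot : Set.range (Scheme.Opens.ι (⊥ : Y.left.Opens)).base = (∅ : Set Y.left.carrier) := by
    rw [Scheme.Opens.range_ι]; simp
  refine ⟨p + 1, .closedPart p Y (Over.mk ((Scheme.Opens.ι Uu) ≫ Y.hom))
    (Over.mk (Scheme.Opens.ι (⊥ : Y.left.Opens) ≫ Y.hom))
    (Over.homMk (Scheme.Opens.ι Uu) rfl) (Over.homMk (Scheme.Opens.ι (⊥ : Y.left.Opens)) rfl)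
    hClu (inferInstanceAs (IsOpenImmersion (Scheme.Opens.ι (⊥ : Y.left.Opens)))) ?_ hp
    (jlinear_of_isEmpty _ (isEmpty_of_range_empty _ hbot) p)⟩
  · show Set.range (Scheme.Opens.ι (⊥ : Y.left.Opens)).base = (Set.range (Scheme.Opens.ι Uu).base)ᶜ
    rw [hbot, Scheme.Opens.range_ι]
    show (∅ : Set Y.left.carrier) = (↑Uu)ᶜ
    rw [hUu]
    show (∅ : Set Y.left.carrier) = (V Finset.univ)ᶜ
    rw [hVuniv]
    simp

/-- Every `n`-T-linear `k`-scheme is J-linear. -/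
theorem isJLinearScheme_of_isTLinear (k : Type) [Field k] (Y : Over (SpecOfField k))
    (n : ℕ) (hY : IsTLinear k n Y) : IsJLinearScheme k Y := by
  induction hY with
  | empty Y h => exact ⟨0, .empty Y h⟩
  | affine Y N h => exact ⟨0, .affine Y N h⟩
  | openCompl n Y Z N i j hi hj hcompl hZ ih =>
    obtain ⟨p, hp⟩ := ih
    exact ⟨p + 1, .openCompl p Y Z (AffineSpaceOver k N) i j hi hj hcompl hp
      (jlinear_mono (Nat.zero_le p) (.affine _ N ⟨Iso.refl _⟩))⟩
  | strat n Y ι hι W f himm hdisj hcover hbdry hW ih =>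
    haveI := hι
    obtain ⟨m, hm⟩ : ∃ m, ∀ i, IsJLinear k m (W i) := by
      choose g hg using ih
      obtain ⟨M, hM⟩ := Finite.exists_le g
      exact ⟨M, fun i => jlinear_mono (hM i) (hg i)⟩
    exact strat_aux Y ι W f himm hdisj hcover hbdry m hm
end
end
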